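/- Let n ≥ r ≥ 2, 0 < η ≤ (r+1)^{-1}, C > 0, 1 < p ≤ ∞ with conjugate exponent q. Let H be an η-nonatomic hypergraph system, e an edge with |e| = r, and f a nonnegative integrable function measurable with respect to the coordinates in e. If f is (C,η,p)-regular, then for every A ∈ S_{∂e} we have (∫_A f dμ)^q ≤ C^q (μ(A) + (r+3)η). -/

import Mathlib

open MeasureTheory ENNReal

/-- `A ⊆ ∏ i, X i` depends only on the coordinates in `e`. -/
def CoordDependsOn {n : ℕ} {X : Fin n → Type*} (e : Finset (Fin n)) (A : Set (∀ i, X i)) : Prop :=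
  ∀ x y : ∀ i, X i, (∀ i ∈ e, x i = y i) → (x ∈ A ↔ y ∈ A)

/-- A function on `∏ i, X i` depending only on the coordinates in `e`. -/
def DependsOnF {n : ℕ} {X : Fin n → Type*} (e : Finset (Fin n)) (f : (∀ i, X i) → ℝ) : Prop :=
  ∀ x y : ∀ i, X i, (∀ i ∈ e, x i = y i) → f x = f y

/-- `A` belongs to `B_e`: it is measurable and depends only on the coordinates in `e`. -/
def CubeSet {n : ℕ} {X : Fin n → Type*} [∀ i, MeasurableSpace (X i)]
    (e : Finset (Fin n)) (A : Set (∀ i, X i)) : Prop :=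
  MeasurableSet A ∧ CoordDependsOn e A

/-- The boundary `∂e` of `e`: subsets of `e` of size `|e| - 1`. -/
def bdry {n : ℕ} (e : Finset (Fin n)) : Finset (Finset (Fin n)) :=
  e.powerset.filter (fun e' => e'.card + 1 = e.card)

/-- `A ∈ S_{∂e}`: `A` is an intersection `⋂_{e' ∈ ∂e} A_{e'}` with `A_{e'} ∈ B_{e'}`. -/
def SPartial {n : ℕ} {X : Fin n → Type*} [∀ i, MeasurableSpace (X i)]
    (e : Finset (Fin n)) (A : Set (∀ i, X i)) : Prop :=
  ∃ F : Finset (Fin n) → Set (∀ i, X i),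
    (∀ e' ∈ bdry e, CubeSet e' (F e')) ∧ A = ⋂ e' ∈ bdry e, F e'

/-- Every atom of `ν` has measure at most `η`. -/
def AtomsLE {Y : Type*} [MeasurableSpace Y] (ν : Measure Y) (η : ℝ) : Prop :=
  ∀ A : Set Y, MeasurableSet A → 0 < ν A →
    (∀ B : Set Y, B ⊆ A → MeasurableSet B → ν B = 0 ∨ ν B = ν A) →
    (ν A).toReal ≤ η

/-- The conditional expectation of `f` with respect to the σ-algebra generated by the
finite partition `P` (explicit formula: average of `f` on each cell). -/
noncomputable def partCE {Y : Type*} [MeasurableSpace Y] (ν : Measure Y)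
    (P : Finset (Set Y)) (f : Y → ℝ) : Y → ℝ :=
  fun x => ∑ s ∈ P, Set.indicator s (fun _ => (∫ y in s, f y ∂ν) / (ν s).toReal) x

/-- `f` is `(C, η, p)`-regular: for every partition `P ⊆ S_{∂e}` of the whole space with
all cells of measure at least `η`, `‖E(f | σ(P))‖_{L_p} ≤ C`. -/
def LpRegular {n : ℕ} {X : Fin n → Type*} [∀ i, MeasurableSpace (X i)]
    (μ : Measure (∀ i, X i)) (e : Finset (Fin n)) (C η : ℝ) (p : ℝ≥0∞)
    (f : (∀ i, X i) → ℝ) : Prop :=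
  ∀ P : Finset (Set (∀ i, X i)), (∀ s ∈ P, SPartial e s) →
    (P : Set (Set (∀ i, X i))).PairwiseDisjoint id →
    ⋃₀ (P : Set (Set (∀ i, X i))) = Set.univ →
    (∀ s ∈ P, η ≤ (μ s).toReal) →
    eLpNorm (partCE μ P f) p μ ≤ ENNReal.ofReal C


/-- B1: a piece of small positive measure inside any positive-measure set. -/
lemma exists_small_piece {Y : Type*} [MeasurableSpace Y] (ν : Measure Y) [IsFiniteMeasure ν]
    {η : ℝ} (hη : 0 < η)
    (hat : AtomsLE ν η)
    {T : Set Y} (hT : MeasurableSet T) (hT0 : 0 < ν T) :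
    ∃ U : Set Y, U ⊆ T ∧ MeasurableSet U ∧ 0 < ν U ∧ (ν U).toReal ≤ η := by
  classical
  set S : Set ℝ≥0∞ := {x | ∃ U : Set Y, U ⊆ T ∧ MeasurableSet U ∧ ν U = x ∧ 0 < x} with hS
  have hTS : ν T ∈ S := ⟨T, subset_rfl, hT, rfl, hT0⟩
  have hSne : S.Nonempty := ⟨_, hTS⟩
  set m : ℝ≥0∞ := sInf S with hm
  have hmT : m ≤ ν T := sInf_le hTS
  have hmtop : m ≠ ∞ := (hmT.trans_lt (measure_lt_top ν T)).ne
  by_cases hcase : m < ENNReal.ofReal η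
  · obtain ⟨x, hxS, hx⟩ := exists_lt_of_csInf_lt hSne hcase
    obtain ⟨U, hUT, hUm, hUx, hx0⟩ := hxS
    refine ⟨U, hUT, hUm, by simpa [hUx] using hx0, ?_⟩
    rw [hUx]
    exact ENNReal.toReal_le_of_le_ofReal hη.le hx.le
  · push_neg at hcase
    have hm0 : 0 < m := lt_of_lt_of_le (by simpa using hη) hcase
    have h2m : m < 2 * m := by
      have := ENNReal.lt_add_right hmtop hm0.ne'
      calc m < m + m := this
        _ = 2 * m := by ring
    obtain ⟨x, hxS, hx⟩ := exists_lt_of_csInf_lt hSne h2m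
    obtain ⟨U, hUT, hUm, hUx, hx0⟩ := hxS
    subst hUx
    have hatom : ∀ B : Set Y, B ⊆ U → MeasurableSet B → ν B = 0 ∨ ν B = ν U := by
      intro B hBU hBm
      by_contra hcon
      push_neg at hcon
      obtain ⟨hB0, hBne⟩ := hcon
      have hB0' : 0 < ν B := pos_iff_ne_zero.mpr hB0
      have hBmem : ν B ∈ S := ⟨B, hBU.trans hUT, hBm, rfl, hB0'⟩
      have hdiff : ν (U \ B) = ν U - ν B := measure_diff hBU hBm.nullMeasurableSet
        (measure_ne_top ν B)
      have hd0 : 0 < ν (U \ B) := by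
        rw [hdiff]
        refine tsub_pos_iff_lt.mpr (lt_of_le_of_ne ?_ hBne)
        exact measure_mono hBU
      have hdmem : ν (U \ B) ∈ S := ⟨U \ B, (Set.diff_subset).trans hUT, hUm.diff hBm, rfl, hd0⟩
      have hsum : ν B + ν (U \ B) = ν U := by
        rw [hdiff]
        exact add_tsub_cancel_of_le (measure_mono hBU)
      have : 2 * m ≤ ν U := by
        calc 2 * m = m + m := by ring
        _ ≤ ν B + ν (U \ B) := add_le_add (sInf_le hBmem) (sInf_le hdmem)
        _ = ν U := hsum
      exact absurd (lt_of_le_of_lt this hx) (lt_irrefl _)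
    have := hat U hUm hx0 hatom
    exact ⟨U, hUT, hUm, hx0, this⟩


/-- If `ν ≤ μ₀` setwise and all atoms of `μ₀` have measure at most `η`,
then all atoms of `ν` have measure at most `η`. -/
lemma atoms_le_of_le {Y : Type*} [MeasurableSpace Y] (ν μ₀ : Measure Y) [IsFiniteMeasure μ₀]
    {η : ℝ}
    (hle : ∀ B : Set Y, MeasurableSet B → ν B ≤ μ₀ B)
    (hat : AtomsLE μ₀ η) : AtomsLE ν η := by
  classical
  intro T hTm hT0 hTatom
  have hνfin : ∀ B : Set Y, ν B ≠ ∞ := by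
    intro B
    refine ne_top_of_le_ne_top (measure_ne_top μ₀ Set.univ) ?_
    exact (measure_mono (Set.subset_univ B)).trans (hle _ MeasurableSet.univ)
  set C : Set (Set Y) := {B | B ⊆ T ∧ MeasurableSet B ∧ ν B = ν T} with hC
  have hTC : T ∈ C := ⟨subset_rfl, hTm, rfl⟩
  have hCinter : ∀ B B', B ∈ C → B' ∈ C → B ∩ B' ∈ C := by
    rintro B B' ⟨hBT, hBm, hBν⟩ ⟨hB'T, hB'm, hB'ν⟩
    refine ⟨(Set.inter_subset_left).trans hBT, hBm.inter hB'm, ?_⟩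
    have hadd : ν (B ∪ B') + ν (B ∩ B') = ν B + ν B' :=
      measure_union_add_inter' hBm B'
    have hun : ν (B ∪ B') ≤ ν T := measure_mono (Set.union_subset hBT hB'T)
    have h1 : ν T + ν (B ∩ B') ≥ ν T + ν T := by
      calc ν T + ν T = ν B + ν B' := by rw [hBν, hB'ν]
        _ = ν (B ∪ B') + ν (B ∩ B') := hadd.symm
        _ ≤ ν T + ν (B ∩ B') := add_le_add_left hun _
    have h2 : ν T ≤ ν (B ∩ B') := ENNReal.le_of_add_le_add_left (hνfin T) h1
    exact le_antisymm (measure_mono ((Set.inter_subset_left).trans hBT)) h2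
  -- infimum of μ₀ over C
  set β : ℝ≥0∞ := sInf ((fun B => μ₀ B) '' C) with hβ
  have hβle : ∀ B ∈ C, β ≤ μ₀ B := fun B hB => sInf_le ⟨B, hB, rfl⟩
  have hβtop : β ≠ ∞ := ne_top_of_le_ne_top (measure_ne_top μ₀ T) (hβle T hTC)
  -- choose a minimizing sequence
  have hseq : ∀ k : ℕ, ∃ B ∈ C, μ₀ B < β + 1 / (k + 1) := by
    intro k
    have h1 : β < β + 1 / (k + 1) := ENNReal.lt_add_right hβtop (by simp)
    obtain ⟨x, hx, hxlt⟩ := exists_lt_of_csInf_lt (Set.Nonempty.image _ ⟨T, hTC⟩) (hβ ▸ h1)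
    obtain ⟨B', hB', rfl⟩ := hx
    exact ⟨B', hB', hxlt⟩
  choose Bseq hBseqC hBseqlt using hseq
  set P : ℕ → Set Y := fun k => ⋂ j ∈ Finset.range (k + 1), Bseq j with hP
  have hPC : ∀ k, P k ∈ C := by
    intro k
    induction k with
    | zero => simpa [hP] using hBseqC 0
    | succ k ih =>
      have hPk : P (k + 1) = Bseq (k + 1) ∩ P k := by
        ext x
        simp only [hP, Set.mem_iInter, Finset.mem_range, Set.mem_inter_iff]
        constructor
        · exact fun h => ⟨h _ (by omega), fun j hj => h j (by omega)⟩
        · rintro ⟨h1, h2⟩ j hj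
          rcases Nat.lt_succ_iff_lt_or_eq.mp hj with h | h
          · exact h2 j h
          · subst h; exact h1
      rw [hPk]
      exact hCinter _ _ (hBseqC (k + 1)) ih
  have hPanti : Antitone P := by
    intro a b hab x hx
    exact Set.mem_iInter₂.mpr fun j hj => Set.mem_iInter₂.mp hx j
      (Finset.mem_range.mpr (lt_of_lt_of_le (Finset.mem_range.mp hj) (by omega)))
  have hPBseq : ∀ k, P k ⊆ Bseq k := fun k =>
    Set.biInter_subset_of_mem (Finset.self_mem_range_succ k)
  set Bstar : Set Y := ⋂ k, P k with hBstar
  have hBstarm : MeasurableSet Bstar := MeasurableSet.iInter fun k => (hPC k).2.1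
  have hBstarT : Bstar ⊆ T := (Set.iInter_subset P 0).trans (hPC 0).1
  have hνBstar : ν Bstar = ν T := by
    have := Directed.measure_iInter (μ := ν) (s := P)
      (fun k => (hPC k).2.1.nullMeasurableSet) (hPanti.directed_ge) ⟨0, hνfin _⟩
    rw [hBstar, this]
    simp only [(hPC _).2.2, iInf_const]
  have hBstarC : Bstar ∈ C := ⟨hBstarT, hBstarm, hνBstar⟩
  have hμ₀Bstar : μ₀ Bstar = β := by
    refine le_antisymm ?_ (hβle _ hBstarC)
    refine ENNReal.le_of_forall_pos_le_add ?_
    intro ε hε _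
    obtain ⟨k, hk⟩ := ENNReal.exists_inv_nat_lt (show (ε : ℝ≥0∞) ≠ 0 by
      simpa using hε.ne')
    have h1 : μ₀ Bstar ≤ μ₀ (Bseq k) :=
      measure_mono ((Set.iInter_subset P k).trans (hPBseq k))
    have h2 : (1 : ℝ≥0∞) / (k + 1) ≤ (k : ℝ≥0∞)⁻¹ := by
      rw [one_div]
      exact ENNReal.inv_le_inv.mpr (by exact_mod_cast le_of_lt (Nat.lt_succ_self k))
    calc μ₀ Bstar ≤ μ₀ (Bseq k) := h1
      _ ≤ β + 1 / (k + 1) := (hBseqlt k).le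
      _ ≤ β + (k : ℝ≥0∞)⁻¹ := add_le_add_right h2 _
      _ ≤ β + ε := add_le_add_right hk.le _
  -- B* is a μ₀-atom
  have hμ₀pos : 0 < μ₀ Bstar := by
    calc (0 : ℝ≥0∞) < ν T := hT0
      _ = ν Bstar := hνBstar.symm
      _ ≤ μ₀ Bstar := hle _ hBstarm
  have hμ₀atom : ∀ B : Set Y, B ⊆ Bstar → MeasurableSet B → μ₀ B = 0 ∨ μ₀ B = μ₀ Bstar := by
    intro B hBsub hBm
    rcases hTatom B (hBsub.trans hBstarT) hBm with h0 | hfull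
    · left
      -- ν B = 0 : then Bstar \ B ∈ C so μ₀ (Bstar \ B) ≥ β = μ₀ Bstar
      have hdC : Bstar \ B ∈ C := by
        refine ⟨(Set.diff_subset).trans hBstarT, hBstarm.diff hBm, ?_⟩
        have : ν (Bstar \ B) = ν Bstar - ν B := measure_diff hBsub hBm.nullMeasurableSet (hνfin B)
        rw [this, h0, tsub_zero, hνBstar]
      have h1 : μ₀ Bstar ≤ μ₀ (Bstar \ B) := hμ₀Bstar ▸ hβle _ hdC
      have h2 : μ₀ B + μ₀ (Bstar \ B) = μ₀ Bstar := by
        have := measure_inter_add_diff (μ := μ₀) Bstar hBm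
        rwa [Set.inter_eq_self_of_subset_right hBsub] at this
      have h3 : μ₀ Bstar + μ₀ B ≤ μ₀ Bstar + 0 := by
        calc μ₀ Bstar + μ₀ B ≤ μ₀ (Bstar \ B) + μ₀ B := add_le_add_left h1 _
          _ = μ₀ Bstar := by rw [add_comm]; exact h2
          _ = μ₀ Bstar + 0 := (add_zero _).symm
      have := ENNReal.le_of_add_le_add_left (measure_ne_top μ₀ _) h3
      exact le_antisymm this (zero_le)
    · right
      -- ν B = ν T : B ∈ C so μ₀ B ≥ β = μ₀ Bstar
      have hBC : B ∈ C := ⟨hBsub.trans hBstarT, hBm, hfull⟩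
      exact le_antisymm (measure_mono hBsub) (hμ₀Bstar ▸ hβle _ hBC)
  have hfinal := hat Bstar hBstarm hμ₀pos hμ₀atom
  have : (ν T).toReal ≤ (μ₀ Bstar).toReal := by
    rw [← hνBstar]
    exact ENNReal.toReal_mono (measure_ne_top μ₀ _) (hle _ hBstarm)
  linarith


/-- B2: the range of a measure with atoms at most `η` is `η`-dense. -/
lemma exists_measure_between {Y : Type*} [MeasurableSpace Y] (ν : Measure Y) [IsFiniteMeasure ν]
    {η : ℝ} (hη : 0 < η)
    (hat : AtomsLE ν η)
    {t : ℝ} (ht0 : 0 ≤ t) (ht : t ≤ (ν Set.univ).toReal) :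
    ∃ U : Set Y, MeasurableSet U ∧ t ≤ (ν U).toReal ∧ (ν U).toReal ≤ t + η := by
  classical
  set α := {U : Set Y // MeasurableSet U ∧ (ν U).toReal ≤ t} with hα
  set r : α → α → Prop := fun U V => ν (U.1 \ V.1) = 0 with hr
  have hdiff3 : ∀ (a b c : Set Y), a \ c ⊆ (a \ b) ∪ (b \ c) := by
    intro a b c x hx
    by_cases hb : x ∈ b
    · exact Or.inr ⟨hb, hx.2⟩
    · exact Or.inl ⟨hx.1, hb⟩
  have hrtrans : ∀ {a b c : α}, r a b → r b c → r a c := by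
    intro a b c hab hbc
    refine le_antisymm ?_ (zero_le)
    calc ν (a.1 \ c.1) ≤ ν ((a.1 \ b.1) ∪ (b.1 \ c.1)) := measure_mono (hdiff3 _ _ _)
      _ ≤ ν (a.1 \ b.1) + ν (b.1 \ c.1) := measure_union_le _ _
      _ = 0 := by rw [hab, hbc, add_zero]
  haveI hrefl : IsRefl α r := ⟨fun a => by simp [hr]⟩
  have hchains : ∀ c : Set α, IsChain r c → ∃ ub : α, ∀ a ∈ c, r a ub := by
    intro c hc
    rcases Set.eq_empty_or_nonempty c with rfl | ⟨U₀, hU₀⟩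
    · exact ⟨⟨∅, MeasurableSet.empty, by simpa using ht0⟩, by simp⟩
    set S : Set ℝ≥0∞ := (fun U : α => ν U.1) '' c with hS
    set s : ℝ≥0∞ := sSup S with hs
    have hSle : ∀ x ∈ S, x ≤ ENNReal.ofReal t := by
      rintro x ⟨U, hU, rfl⟩
      exact ENNReal.le_ofReal_iff_toReal_le (measure_ne_top ν _) ht0 |>.mpr U.2.2
    have hsle : s ≤ ENNReal.ofReal t := sSup_le hSle
    have hstop : s ≠ ∞ := ne_top_of_le_ne_top ENNReal.ofReal_ne_top hsle
    rcases eq_or_ne s 0 with hs0 | hs0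
    · refine ⟨U₀, fun V hV => ?_⟩
      have h1 : ν V.1 ≤ s := le_sSup ⟨V, hV, rfl⟩
      have h0 : ν V.1 = 0 := le_antisymm (hs0 ▸ h1) (zero_le)
      exact le_antisymm ((measure_mono Set.diff_subset).trans h0.le) (zero_le)
    -- choose an approximating sequence
    have hseq : ∀ k : ℕ, ∃ U ∈ c, s - 1 / (k + 1) < ν U.1 := by
      intro k
      have hlt : s - 1 / (k + 1) < s := ENNReal.sub_lt_self hstop hs0 (by simp)
      obtain ⟨x, hxS, hxlt⟩ := lt_sSup_iff.mp hlt
      obtain ⟨U, hU, rfl⟩ := hxS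
      exact ⟨U, hU, hxlt⟩
    choose U hUc hUlt using hseq
    set W : Set Y := ⋃ k, (U k).1 with hW
    have hWm : MeasurableSet W := MeasurableSet.iUnion fun k => (U k).2.1
    set V : ℕ → Set Y := fun k => ⋃ j ∈ Finset.range (k + 1), (U j).1 with hV
    have hVmono : Monotone V := by
      intro a b hab x hx
      obtain ⟨j, hj, hxj⟩ := Set.mem_iUnion₂.mp hx
      exact Set.mem_iUnion₂.mpr ⟨j, Finset.mem_range.mpr
        (lt_of_lt_of_le (Finset.mem_range.mp hj) (by omega)), hxj⟩
    have hWV : W = ⋃ k, V k := by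
      apply Set.Subset.antisymm
      · refine Set.iUnion_mono' fun k => ⟨k, fun x hx => ?_⟩
        exact Set.mem_iUnion₂.mpr ⟨k, Finset.self_mem_range_succ k, hx⟩
      · exact Set.iUnion_subset fun k => Set.iUnion₂_subset fun j _ =>
          Set.subset_iUnion (fun i => (U i).1) j
    have hVle : ∀ k, ∃ M, M ∈ c ∧ ν (V k \ M.1) = 0 := by
      intro k
      induction k with
      | zero =>
        refine ⟨U 0, hUc 0, ?_⟩
        have h0 : V 0 = (U 0).1 := by simp [hV]
        rw [h0]; simp
      | succ k ih =>
        obtain ⟨M, hMc, hM0⟩ := ih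
        have hstep : V (k + 1) = V k ∪ (U (k + 1)).1 := by
          ext x
          simp only [hV, Set.mem_iUnion, Finset.mem_range, Set.mem_union, exists_prop]
          constructor
          · rintro ⟨j, hj, hxj⟩
            rcases Nat.lt_succ_iff_lt_or_eq.mp hj with h | h
            · exact Or.inl ⟨j, h, hxj⟩
            · subst h; exact Or.inr hxj
          · rintro (⟨j, hj, hxj⟩ | hx)
            · exact ⟨j, by omega, hxj⟩
            · exact ⟨k + 1, by omega, hx⟩
        rcases hc.total hMc (hUc (k + 1)) with h | h
        · -- r M (U (k+1)) : adopt U (k+1)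
          refine ⟨U (k + 1), hUc (k + 1), ?_⟩
          rw [hstep]
          refine le_antisymm ?_ (zero_le)
          calc ν ((V k ∪ (U (k+1)).1) \ (U (k+1)).1)
              ≤ ν (V k \ (U (k+1)).1) + ν ((U (k+1)).1 \ (U (k+1)).1) := by
                refine (measure_mono ?_).trans (measure_union_le _ _)
                rw [Set.union_diff_distrib]
            _ ≤ (ν (V k \ M.1) + ν (M.1 \ (U (k+1)).1)) + ν ((U (k+1)).1 \ (U (k+1)).1) := by
                gcongr
                exact (measure_mono (hdiff3 _ _ _)).trans (measure_union_le _ _)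
            _ = 0 := by rw [hM0, h]; simp
        · -- r (U (k+1)) M : keep M
          refine ⟨M, hMc, ?_⟩
          rw [hstep]
          refine le_antisymm ?_ (zero_le)
          calc ν ((V k ∪ (U (k+1)).1) \ M.1) ≤ ν (V k \ M.1) + ν ((U (k+1)).1 \ M.1) := by
                refine (measure_mono ?_).trans (measure_union_le _ _)
                rw [Set.union_diff_distrib]
            _ = 0 := by rw [hM0, h]; simp
    have hνW : ν W ≤ s := by
      rw [hWV, hVmono.measure_iUnion]
      refine iSup_le fun k => ?_
      obtain ⟨M, hMc, hM0⟩ := hVle k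
      calc ν (V k) ≤ ν (V k ∩ M.1) + ν (V k \ M.1) := (measure_inter_add_diff _ M.2.1).symm.le
        _ = ν (V k ∩ M.1) := by rw [hM0, add_zero]
        _ ≤ ν M.1 := measure_mono Set.inter_subset_right
        _ ≤ s := le_sSup ⟨M, hMc, rfl⟩
    have hWα : (ν W).toReal ≤ t :=
      ENNReal.toReal_le_of_le_ofReal ht0 (hνW.trans hsle)
    refine ⟨⟨W, hWm, hWα⟩, fun Vc hVc => ?_⟩
    by_cases hcase : ∃ k, ν (Vc.1 \ (U k).1) = 0
    · obtain ⟨k, hk⟩ := hcase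
      refine le_antisymm ?_ (zero_le)
      calc ν (Vc.1 \ W) ≤ ν (Vc.1 \ (U k).1) :=
            measure_mono (Set.diff_subset_diff_right (Set.subset_iUnion (fun i => (U i).1) k))
        _ = 0 := hk
    · push_neg at hcase
      have hUV : ∀ k, ν ((U k).1 \ Vc.1) = 0 := by
        intro k
        rcases hc.total hVc (hUc k) with h | h
        · exact absurd h (hcase k)
        · exact h
      have hWVc : ν (W \ Vc.1) = 0 := by
        refine le_antisymm ?_ (zero_le)
        calc ν (W \ Vc.1) = ν (⋃ k, ((U k).1 \ Vc.1)) := by rw [hW, Set.iUnion_diff]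
          _ ≤ ∑' k, ν ((U k).1 \ Vc.1) := measure_iUnion_le _
          _ = 0 := by simp [hUV]
      have hWcap : ν (W ∩ Vc.1) = ν W := by
        have h := measure_inter_add_diff W Vc.2.1 (μ := ν)
        rw [hWVc, add_zero] at h
        exact h
      have key : ∀ k : ℕ, ν (Vc.1 \ W) ≤ 1 / (k + 1) := by
        intro k
        have h1 : ν W + ν (Vc.1 \ W) ≤ s := by
          calc ν W + ν (Vc.1 \ W) = ν (Vc.1 ∩ W) + ν (Vc.1 \ W) := by
                rw [Set.inter_comm, hWcap]
            _ = ν Vc.1 := measure_inter_add_diff _ hWm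
            _ ≤ s := le_sSup ⟨Vc, hVc, rfl⟩
        have h2 : s < ν W + 1 / (k + 1) := by
          calc s < ν (U k).1 + 1 / (k + 1) :=
              ENNReal.lt_add_of_sub_lt_right (c := (1 : ℝ≥0∞) / (k + 1)) (Or.inl hstop) (hUlt k)
            _ ≤ ν W + 1 / (k + 1) :=
                add_le_add_left (measure_mono (Set.subset_iUnion (fun i => (U i).1) k)) _
        have h3 : ν W + ν (Vc.1 \ W) < ν W + 1 / (k + 1) := lt_of_le_of_lt h1 h2
        exact le_of_lt (ENNReal.add_lt_add_iff_left (measure_ne_top ν W) |>.mp h3)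
      have hzero : ν (Vc.1 \ W) ≤ 0 := by
        refine ENNReal.le_of_forall_pos_le_add ?_
        intro ε hε _
        obtain ⟨k, hk⟩ := ENNReal.exists_inv_nat_lt (show (ε : ℝ≥0∞) ≠ 0 by simpa using hε.ne')
        have h2 : (1 : ℝ≥0∞) / (k + 1) ≤ (k : ℝ≥0∞)⁻¹ := by
          rw [one_div]
          exact ENNReal.inv_le_inv.mpr (by exact_mod_cast le_of_lt (Nat.lt_succ_self k))
        calc ν (Vc.1 \ W) ≤ 1 / (k + 1) := key k
          _ ≤ (k : ℝ≥0∞)⁻¹ := h2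
          _ ≤ ε := hk.le
          _ = 0 + (ε : ℝ≥0∞) := (zero_add (ε : ℝ≥0∞)).symm
      exact le_antisymm hzero (zero_le)
  obtain ⟨M, hM⟩ := exists_maximal_of_chains_bounded hchains (fun {a b c} => hrtrans)
  -- extract the final set
  by_cases hMt : (ν M.1).toReal < t
  · have hcompl : 0 < ν (Set.univ \ M.1) := by
      by_contra hcon
      push_neg at hcon
      have h0 : ν (Set.univ \ M.1) = 0 := le_antisymm hcon (zero_le)
      have : ν Set.univ ≤ ν M.1 + ν (Set.univ \ M.1) := by
        refine (measure_mono ?_).trans (measure_union_le _ _)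
        intro x _
        by_cases h : x ∈ M.1
        · exact Or.inl h
        · exact Or.inr ⟨trivial, h⟩
      rw [h0, add_zero] at this
      have := ENNReal.toReal_mono (measure_ne_top ν _) this
      linarith
    obtain ⟨Wp, hWpsub, hWpm, hWp0, hWpη⟩ :=
      exists_small_piece ν hη hat (MeasurableSet.univ.diff M.2.1) hcompl
    have hdisj : Disjoint M.1 Wp := by
      refine Set.disjoint_left.mpr fun x hxM hxW => ?_
      exact (hWpsub hxW).2 hxM
    have hunion : ν (M.1 ∪ Wp) = ν M.1 + ν Wp := measure_union hdisj hWpm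
    have htR : (ν (M.1 ∪ Wp)).toReal = (ν M.1).toReal + (ν Wp).toReal := by
      rw [hunion, ENNReal.toReal_add (measure_ne_top ν _) (measure_ne_top ν _)]
    by_cases hover : (ν (M.1 ∪ Wp)).toReal ≤ t
    · -- contradiction with maximality
      exfalso
      set M' : α := ⟨M.1 ∪ Wp, M.2.1.union hWpm, hover⟩ with hM'
      have h1 : r M M' := by
        refine le_antisymm ?_ (zero_le)
        have : M.1 \ M'.1 = ∅ := by
          rw [hM']
          simp [Set.diff_eq_empty.mpr Set.subset_union_left]
        rw [this]; simp
      have h2 := hM M' h1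
      -- h2 : ν (M'.1 \ M.1) = 0, but M'.1 \ M.1 ⊇ Wp
      have h3 : ν Wp ≤ ν (M'.1 \ M.1) := by
        refine measure_mono fun x hx => ⟨Or.inr hx, fun hxM => ?_⟩
        exact (hWpsub hx).2 hxM
      rw [h2] at h3
      exact absurd (le_antisymm h3 (zero_le)) hWp0.ne'
    · push_neg at hover
      refine ⟨M.1 ∪ Wp, M.2.1.union hWpm, hover.le, ?_⟩
      rw [htR]
      have := M.2.2
      linarith
  · push_neg at hMt
    exact ⟨M.1, M.2.1, hMt, M.2.2.trans (by linarith)⟩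


/-- Single-cell Hölder bound from the `L^p` bound on the conditional expectation. -/
lemma cell_bound {Y : Type*} [MeasurableSpace Y] (ν : Measure Y) [IsProbabilityMeasure ν]
    (P : Finset (Set Y)) (hmeas : ∀ s ∈ P, MeasurableSet s)
    (f : Y → ℝ) (hf0 : 0 ≤ f)
    {B : Set Y} (hB : B ∈ P) (hBpos : ν B ≠ 0)
    {p : ℝ≥0∞} (hp : 1 < p) {q : ℝ} (hq : 1 ≤ q)
    (hpq : 1 / p + 1 / ENNReal.ofReal q = 1)
    {C : ℝ} (hC : 0 < C)
    (hle : eLpNorm (partCE ν P f) p ν ≤ ENNReal.ofReal C) :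
    ∫ x in B, f x ∂ν ≤ C * ((ν B).toReal) ^ (1 / q) := by
  classical
  set a : ℝ := (∫ y in B, f y ∂ν) / (ν B).toReal with ha
  have hBmeas : MeasurableSet B := hmeas B hB
  have hBfin : ν B ≠ ∞ := measure_ne_top ν B
  have hBt : 0 < (ν B).toReal := ENNReal.toReal_pos hBpos hBfin
  have haint : ∀ s ∈ P, 0 ≤ (∫ y in s, f y ∂ν) / (ν s).toReal := by
    intro s hs
    apply div_nonneg _ ENNReal.toReal_nonneg
    exact setIntegral_nonneg (hmeas s hs) (fun x _ => hf0 x)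
  have ha0 : 0 ≤ a := haint B hB
  have hintB : ∫ x in B, f x ∂ν = a * (ν B).toReal := by
    rw [ha]; field_simp
  -- pointwise bound
  have hpt : ∀ x, ‖Set.indicator B (fun _ => a) x‖ ≤ ‖partCE ν P f x‖ := by
    intro x
    have h1 : (0:ℝ) ≤ Set.indicator B (fun _ => a) x := Set.indicator_nonneg (fun _ _ => ha0) x
    have h2 : Set.indicator B (fun _ => a) x ≤ partCE ν P f x := by
      refine Finset.single_le_sum (f := fun s =>
        Set.indicator s (fun _ => (∫ y in s, f y ∂ν) / (ν s).toReal) x) ?_ hB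
      intro s hs
      exact Set.indicator_nonneg (fun _ _ => haint s hs) x
    have h3 : (0:ℝ) ≤ partCE ν P f x := le_trans h1 h2
    rw [Real.norm_of_nonneg h1, Real.norm_of_nonneg h3]
    exact h2
  have hnorm : eLpNorm (Set.indicator B (fun _ => a) : Y → ℝ) p ν ≤ ENNReal.ofReal C :=
    (eLpNorm_mono hpt).trans hle
  have hnn : ‖a‖ₑ = ENNReal.ofReal a := by
    rw [← ofReal_norm_eq_enorm, Real.norm_of_nonneg ha0]
  by_cases hptop : p = ∞
  · -- q = 1
    rw [hptop] at hpq
    simp at hpq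
    -- hpq : q = 1
    rw [hptop, eLpNorm_exponent_top, eLpNormEssSup_indicator_const_eq B a hBpos, hnn] at hnorm
    have haC : a ≤ C := by
      rw [ENNReal.ofReal_le_ofReal_iff hC.le] at hnorm
      exact hnorm
    rw [hpq, hintB]
    simp only [one_div_one, Real.rpow_one]
    exact mul_le_mul_of_nonneg_right haC ENNReal.toReal_nonneg
  · -- p finite
    have hp0 : p ≠ 0 := (lt_trans zero_lt_one hp).ne'
    have hptr : 1 < p.toReal := by
      rw [← ENNReal.toReal_one]
      exact ENNReal.toReal_lt_toReal one_ne_top hptop |>.mpr hp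
    have hind : eLpNorm (Set.indicator B (fun _ => a) : Y → ℝ) p ν
        = ENNReal.ofReal a * ν B ^ (1 / p.toReal) := by
      rw [eLpNorm_indicator_const hBmeas hp0 hptop, hnn]
    rw [hind] at hnorm
    -- compute 1/q = 1 - 1/p.toReal
    have hofq : (ENNReal.ofReal q)⁻¹ = 1 - p⁻¹ := by
      rw [← hpq]
      simp only [one_div]
      rw [ENNReal.add_sub_cancel_left]
      exact ENNReal.inv_ne_top.mpr hp0
    have hqr : 1 / q = 1 - 1 / p.toReal := by
      have h1 : ((ENNReal.ofReal q)⁻¹).toReal = (1 - p⁻¹ : ℝ≥0∞).toReal := by rw [hofq]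
      rw [ENNReal.toReal_inv, ENNReal.toReal_ofReal (by linarith)] at h1
      rw [ENNReal.toReal_sub_of_le (by
        simpa using ENNReal.inv_le_one.mpr hp.le) one_ne_top] at h1
      rw [ENNReal.toReal_inv, ENNReal.toReal_one] at h1
      rw [one_div, h1, one_div]
    -- multiply both sides by (ν B) ^ (1 - 1/p.toReal)
    have hmul : ENNReal.ofReal a * ν B ≤ ENNReal.ofReal C * ν B ^ (1 - 1 / p.toReal) := by
      calc ENNReal.ofReal a * ν B
          = ENNReal.ofReal a * ν B ^ (1 / p.toReal) * ν B ^ (1 - 1 / p.toReal) := by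
            rw [mul_assoc, ← ENNReal.rpow_add _ _ hBpos hBfin]
            norm_num
        _ ≤ ENNReal.ofReal C * ν B ^ (1 - 1 / p.toReal) := by
            exact mul_le_mul_left hnorm _
    have hreal : a * (ν B).toReal ≤ C * (ν B).toReal ^ (1 - 1 / p.toReal) := by
      have h2 : (ENNReal.ofReal a * ν B).toReal ≤
          (ENNReal.ofReal C * ν B ^ (1 - 1 / p.toReal)).toReal := by
        apply ENNReal.toReal_mono _ hmul
        have hexp0 : 0 ≤ 1 - 1 / p.toReal := by
          have h4 : 1 / p.toReal < 1 := by
            rw [div_lt_one (by linarith)]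
            linarith
          linarith
        exact ENNReal.mul_ne_top ENNReal.ofReal_ne_top
          (ENNReal.rpow_ne_top_of_nonneg hexp0 hBfin)
      rwa [ENNReal.toReal_mul, ENNReal.toReal_mul, ENNReal.toReal_ofReal ha0,
        ENNReal.toReal_ofReal hC.le, ← ENNReal.toReal_rpow] at h2
    rw [hintB, hqr]
    exact hreal


section Aux
variable {n : ℕ} {X : Fin n → Type*} [∀ i, MeasurableSpace (X i)]

lemma cubeSet_univ (e' : Finset (Fin n)) : CubeSet e' (Set.univ : Set (∀ i, X i)) :=
  ⟨MeasurableSet.univ, fun _ _ _ => Iff.rfl⟩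

lemma CubeSet.compl {e' : Finset (Fin n)} {A : Set (∀ i, X i)} (h : CubeSet e' A) :
    CubeSet e' Aᶜ :=
  ⟨h.1.compl, fun x y hxy => not_iff_not.mpr (h.2 x y hxy)⟩

lemma CubeSet.union {e' : Finset (Fin n)} {A B : Set (∀ i, X i)}
    (hA : CubeSet e' A) (hB : CubeSet e' B) : CubeSet e' (A ∪ B) :=
  ⟨hA.1.union hB.1, fun x y hxy => or_congr (hA.2 x y hxy) (hB.2 x y hxy)⟩

lemma cubeSet_cyl {e' : Finset (Fin n)} {i₀ : Fin n} (hi : i₀ ∈ e') {U : Set (X i₀)}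
    (hU : MeasurableSet U) : CubeSet e' ((fun x : ∀ i, X i => x i₀) ⁻¹' U) :=
  ⟨(measurable_pi_apply i₀) hU, fun x y hxy => by
    simp only [Set.mem_preimage, hxy i₀ hi]⟩

lemma mem_bdry {e e' : Finset (Fin n)} : e' ∈ bdry e ↔ e' ⊆ e ∧ e'.card + 1 = e.card := by
  simp [bdry, Finset.mem_filter, Finset.mem_powerset]

lemma card_bdry_le (e : Finset (Fin n)) : (bdry e).card ≤ e.card := by
  have hsub : bdry e ⊆ e.image (fun i => e.erase i) := by
    intro e' he'
    obtain ⟨hsub, hcard⟩ := mem_bdry.mp he'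
    have hd : (e \ e').card = 1 := by
      rw [Finset.card_sdiff_of_subset hsub]; omega
    obtain ⟨i, hi⟩ := Finset.card_eq_one.mp hd
    have hie : i ∈ e := by
      have : i ∈ e \ e' := hi ▸ Finset.mem_singleton_self i
      exact (Finset.mem_sdiff.mp this).1
    have hie' : i ∉ e' := by
      have : i ∈ e \ e' := hi ▸ Finset.mem_singleton_self i
      exact (Finset.mem_sdiff.mp this).2
    refine Finset.mem_image.mpr ⟨i, hie, ?_⟩
    refine (Finset.eq_of_subset_of_card_le ?_ ?_).symm
    · intro x hx
      exact Finset.mem_erase.mpr ⟨fun hxx => hie' (hxx ▸ hx), hsub hx⟩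
    · rw [Finset.card_erase_of_mem hie]; omega
  exact (Finset.card_le_card hsub).trans Finset.card_image_le

lemma bdry_subset_nonempty {e e' : Finset (Fin n)} (he' : e' ∈ bdry e) (hcard : 2 ≤ e.card) :
    e'.Nonempty := by
  obtain ⟨_, hc⟩ := mem_bdry.mp he'
  exact Finset.card_pos.mp (by omega)

/-- `SPartial` for an intersection of boundary cube sets, one possibly intersected
with an extra cube set. -/
lemma sPartial_inter_extra {e : Finset (Fin n)} {K' : Finset (Finset (Fin n))}
    (hK' : ∀ x ∈ K', x ∈ bdry e) {F : Finset (Fin n) → Set (∀ i, X i)}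
    (hF : ∀ e' ∈ bdry e, CubeSet e' (F e'))
    {e'b : Finset (Fin n)} (hb : e'b ∈ bdry e) (hbK : e'b ∉ K')
    {Z : Set (∀ i, X i)} (hZ : CubeSet e'b Z) :
    SPartial e ((⋂ e'' ∈ K', F e'') ∩ Z) := by
  classical
  refine ⟨fun e'' => if e'' = e'b then Z else if e'' ∈ K' then F e'' else Set.univ, ?_, ?_⟩
  · intro e'' he''
    by_cases h1 : e'' = e'b
    · subst h1; simpa using hZ
    · by_cases h2 : e'' ∈ K'
      · simp only [h1, if_false, h2, if_true]
        exact hF e'' he''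
      · simp only [h1, if_false, h2, if_true]
        exact cubeSet_univ e''
  · ext x
    simp only [Set.mem_inter_iff, Set.mem_iInter]
    constructor
    · rintro ⟨h1, h2⟩ e'' he''
      by_cases hb1 : e'' = e'b
      · subst hb1; simp [h2]
      · by_cases hb2 : e'' ∈ K'
        · simpa [hb1, hb2] using h1 e'' hb2
        · simp [hb1, hb2]
    · intro h
      refine ⟨fun e'' he'' => ?_, ?_⟩
      · have := h e'' (hK' e'' he'')
        have hne : e'' ≠ e'b := fun hc => hbK (hc ▸ he'')
        simpa [hne, he''] using this
      · have := h e'b hb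
        simpa using this

lemma sPartial_inter {e : Finset (Fin n)} {K' : Finset (Finset (Fin n))}
    (hK' : ∀ x ∈ K', x ∈ bdry e) {F : Finset (Fin n) → Set (∀ i, X i)}
    (hF : ∀ e' ∈ bdry e, CubeSet e' (F e')) :
    SPartial e (⋂ e'' ∈ K', F e'') := by
  classical
  refine ⟨fun e'' => if e'' ∈ K' then F e'' else Set.univ, ?_, ?_⟩
  · intro e'' he''
    by_cases h2 : e'' ∈ K'
    · simpa [h2] using hF e'' he''
    · simpa [h2] using cubeSet_univ e''
  · ext x
    simp only [Set.mem_iInter]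
    constructor
    · intro h e'' he''
      by_cases hb2 : e'' ∈ K'
      · simpa [hb2] using h e'' hb2
      · simp [hb2]
    · intro h e'' he''
      have := h e'' (hK' e'' he'')
      simpa [he''] using this

/-- Marginal of the product measure on one coordinate. -/
lemma pi_marginal (μ : ∀ i, Measure (X i)) [∀ i, IsProbabilityMeasure (μ i)]
    (i₀ : Fin n) {U : Set (X i₀)} (hU : MeasurableSet U) :
    Measure.pi μ ((fun x : ∀ i, X i => x i₀) ⁻¹' U) = μ i₀ U := by
  classical
  have hpre : (fun x : ∀ i, X i => x i₀) ⁻¹' U =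
      Set.pi Set.univ (Function.update (fun i => (Set.univ : Set (X i))) i₀ U) := by
    ext x
    simp only [Set.mem_preimage, Set.mem_pi, Set.mem_univ, true_implies]
    constructor
    · intro hx i
      by_cases h : i = i₀
      · subst h; simpa using hx
      · simp [Function.update_of_ne h]
    · intro hx
      have := hx i₀
      simpa using this
  rw [hpre, Measure.pi_pi]
  rw [Finset.prod_eq_single i₀]
  · simp
  · intro i _ hne
    simp [Function.update_of_ne hne]
  · simp
end Aux


section Greedy
variable {n : ℕ} {X : Fin n → Type*} [∀ i, MeasurableSpace (X i)]

open Classical in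
/-- Greedy refinement: returns the set of kept constraints and the list of split-off cells. -/
noncomputable def greedy (μπ : Measure (∀ i, X i)) (F : Finset (Fin n) → Set (∀ i, X i))
    (η : ℝ) : List (Finset (Fin n)) → Finset (Finset (Fin n)) × List (Set (∀ i, X i))
  | [] => (∅, [])
  | e' :: l =>
    if η ≤ (μπ ((⋂ e'' ∈ (greedy μπ F η l).1, F e'') ∩ (F e')ᶜ)).toReal ∧
       η ≤ (μπ ((⋂ e'' ∈ (greedy μπ F η l).1, F e'') ∩ F e')).toReal
    then (insert e' (greedy μπ F η l).1,
          ((⋂ e'' ∈ (greedy μπ F η l).1, F e'') ∩ (F e')ᶜ) :: (greedy μπ F η l).2)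
    else greedy μπ F η l

theorem greedy_spec (μπ : Measure (∀ i, X i)) [IsProbabilityMeasure μπ]
    (F : Finset (Fin n) → Set (∀ i, X i)) (hFm : ∀ e', MeasurableSet (F e'))
    {η : ℝ} (hη0 : 0 < η) (hη1 : η ≤ 1) (l : List (Finset (Fin n))) (hlnd : l.Nodup) :
    (∀ x ∈ (greedy μπ F η l).1, x ∈ l) ∧
    η ≤ (μπ (⋂ e'' ∈ (greedy μπ F η l).1, F e'')).toReal ∧
    (∀ e' ∈ l, e' ∈ (greedy μπ F η l).1 ∨
      (μπ ((⋂ e'' ∈ (greedy μπ F η l).1, F e'') \ F e')).toReal < η ∨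
      (μπ ((⋂ e'' ∈ (greedy μπ F η l).1, F e'') ∩ F e')).toReal < η) ∧
    (∀ c ∈ (greedy μπ F η l).2, ∃ K' : Finset (Finset (Fin n)), ∃ e',
      (∀ x ∈ K', x ∈ l) ∧ e' ∈ l ∧ e' ∉ K' ∧
      c = (⋂ e'' ∈ K', F e'') ∩ (F e')ᶜ ∧ η ≤ (μπ c).toReal) ∧
    List.Pairwise Disjoint ((⋂ e'' ∈ (greedy μπ F η l).1, F e'') :: (greedy μπ F η l).2) ∧
    (∀ x, x ∈ (⋂ e'' ∈ (greedy μπ F η l).1, F e'') ∨ ∃ c ∈ (greedy μπ F η l).2, x ∈ c) := by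
  classical
  induction l with
  | nil =>
    simp only [greedy]
    refine ⟨by simp, ?_, by simp, by simp, by simp, by simp⟩
    simp only [Finset.notMem_empty, Set.iInter_of_empty, Set.iInter_univ]
    simp [measure_univ, hη1]
  | cons e' l ih =>
    have hlnd' : l.Nodup := (List.nodup_cons.mp hlnd).2
    have he'l : e' ∉ l := (List.nodup_cons.mp hlnd).1
    obtain ⟨ihK, ihD, ihskip, ihcells, ihdisj, ihcover⟩ := ih hlnd'
    set K := (greedy μπ F η l).1 with hK
    set cells := (greedy μπ F η l).2 with hcells
    set D : Set (∀ i, X i) := ⋂ e'' ∈ K, F e'' with hD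
    have hDdisj : ∀ c ∈ cells, Disjoint D c := (List.pairwise_cons.mp ihdisj).1
    have hcellpw : List.Pairwise Disjoint cells := (List.pairwise_cons.mp ihdisj).2
    by_cases hcond : η ≤ (μπ (D ∩ (F e')ᶜ)).toReal ∧ η ≤ (μπ (D ∩ F e')).toReal
    · -- keep the constraint e'
      have hg : greedy μπ F η (e' :: l) = (insert e' K, (D ∩ (F e')ᶜ) :: cells) := by
        rw [greedy, if_pos hcond]
      have hDnew : (⋂ e'' ∈ insert e' K, F e'') = F e' ∩ D :=
        Finset.set_biInter_insert _ _ _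
      rw [hg]
      simp only [hDnew]
      have hsub : F e' ∩ D ⊆ D := Set.inter_subset_right
      refine ⟨?_, ?_, ?_, ?_, ?_, ?_⟩
      · intro x hx
        rcases Finset.mem_insert.mp hx with rfl | hx
        · exact List.mem_cons_self
        · exact List.mem_cons_of_mem _ (ihK x hx)
      · rw [Set.inter_comm]
        exact hcond.2
      · intro a ha
        rcases List.mem_cons.mp ha with rfl | ha
        · exact Or.inl (Finset.mem_insert_self _ _)
        · rcases ihskip a ha with h | h | h
          · exact Or.inl (Finset.mem_insert_of_mem h)
          · refine Or.inr (Or.inl (lt_of_le_of_lt ?_ h))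
            exact ENNReal.toReal_mono (measure_ne_top μπ _)
              (measure_mono (Set.diff_subset_diff_left hsub))
          · refine Or.inr (Or.inr (lt_of_le_of_lt ?_ h))
            exact ENNReal.toReal_mono (measure_ne_top μπ _)
              (measure_mono (Set.inter_subset_inter_left _ hsub))
      · intro c hc
        rcases List.mem_cons.mp hc with rfl | hc
        · refine ⟨K, e', fun x hx => List.mem_cons_of_mem _ (ihK x hx),
            List.mem_cons_self, fun hcon => he'l (ihK e' hcon), rfl, hcond.1⟩
        · obtain ⟨K', a, hK'1, hK'2, hK'3, hK'4, hK'5⟩ := ihcells c hc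
          exact ⟨K', a, fun x hx => List.mem_cons_of_mem _ (hK'1 x hx),
            List.mem_cons_of_mem _ hK'2, hK'3, hK'4, hK'5⟩
      · refine List.pairwise_cons.mpr ⟨?_, List.pairwise_cons.mpr ⟨?_, hcellpw⟩⟩
        · intro c hc
          rcases List.mem_cons.mp hc with rfl | hc
          · exact Set.disjoint_left.mpr fun x hx1 hx2 => hx2.2 hx1.1
          · exact Set.disjoint_left.mpr fun x hx1 hx2 =>
              Set.disjoint_left.mp (hDdisj c hc) (hsub hx1) hx2
        · intro c hc
          exact Set.disjoint_left.mpr fun x hx1 hx2 =>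
            Set.disjoint_left.mp (hDdisj c hc) hx1.1 hx2
      · intro x
        rcases ihcover x with hx | ⟨c, hc, hx⟩
        · by_cases hxe : x ∈ F e'
          · exact Or.inl ⟨hxe, hx⟩
          · exact Or.inr ⟨D ∩ (F e')ᶜ, List.mem_cons_self, ⟨hx, hxe⟩⟩
        · exact Or.inr ⟨c, List.mem_cons_of_mem _ hc, hx⟩
    · -- skip the constraint e'
      have hg : greedy μπ F η (e' :: l) = (K, cells) := by
        rw [greedy, if_neg hcond]
      rw [hg]
      refine ⟨fun x hx => List.mem_cons_of_mem _ (ihK x hx), ihD, ?_, ?_, ihdisj, ihcover⟩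
      · intro a ha
        rcases List.mem_cons.mp ha with rfl | ha
        · rcases not_and_or.mp hcond with h | h
          · push_neg at h
            refine Or.inr (Or.inl ?_)
            rwa [Set.diff_eq]
          · push_neg at h
            exact Or.inr (Or.inr h)
        · rcases ihskip a ha with h | h | h
          · exact Or.inl h
          · exact Or.inr (Or.inl h)
          · exact Or.inr (Or.inr h)
      · intro c hc
        obtain ⟨K', a, hK'1, hK'2, hK'3, hK'4, hK'5⟩ := ihcells c hc
        exact ⟨K', a, fun x hx => List.mem_cons_of_mem _ (hK'1 x hx),
          List.mem_cons_of_mem _ hK'2, hK'3, hK'4, hK'5⟩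
end Greedy

section Main
variable {n : ℕ} {X : Fin n → Type*} [∀ i, MeasurableSpace (X i)]

lemma SPartial.measurableSet {e : Finset (Fin n)} {A : Set (∀ i, X i)}
    (h : SPartial e A) : MeasurableSet A := by
  obtain ⟨F, hF, rfl⟩ := h
  exact MeasurableSet.biInter (Finset.countable_toSet _) (fun e' he' => (hF e' he').1)

/-- Final step: from a suitable partition containing a cell `B ⊇ A` of controlled measure,
conclude the Hölder-type bound. -/
lemma final_step {r : ℕ} (μπ : Measure (∀ i, X i)) [IsProbabilityMeasure μπ]
    (e : Finset (Fin n)) {C η : ℝ} (hC : 0 < C) (hη0 : 0 < η)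
    {p : ℝ≥0∞} (hp : 1 < p) {q : ℝ} (hq : 1 ≤ q)
    (hpq : 1 / p + 1 / ENNReal.ofReal q = 1)
    {f : (∀ i, X i) → ℝ} (hf0 : 0 ≤ f) (hfint : Integrable f μπ)
    (hreg : LpRegular μπ e C η p f)
    (P : Finset (Set (∀ i, X i)))
    (hPS : ∀ s ∈ P, SPartial e s)
    (hPdisj : (P : Set (Set (∀ i, X i))).PairwiseDisjoint id)
    (hPcover : ⋃₀ (P : Set (Set (∀ i, X i))) = Set.univ)
    (hPmeas : ∀ s ∈ P, η ≤ (μπ s).toReal)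
    {B : Set (∀ i, X i)} (hBP : B ∈ P)
    {A : Set (∀ i, X i)} (hAB : A ⊆ B) (hAm : MeasurableSet A)
    (hbound : (μπ B).toReal ≤ (μπ A).toReal + (r + 3) * η) :
    (∫ x in A, f x ∂μπ) ^ q ≤ C ^ q * ((μπ A).toReal + (r + 3) * η) := by
  have hPm : ∀ s ∈ P, MeasurableSet s := fun s hs => (hPS s hs).measurableSet
  have hB0 : μπ B ≠ 0 := by
    intro hcon
    have := hPmeas B hBP
    rw [hcon] at this
    simp at this
    linarith
  have hlp := hreg P hPS hPdisj hPcover hPmeas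
  have hcell := cell_bound μπ P hPm f hf0 hBP hB0 hp hq hpq hC hlp
  have hq0 : (0:ℝ) < q := by linarith
  set m : ℝ := (μπ B).toReal with hm
  have hm0 : 0 ≤ m := ENNReal.toReal_nonneg
  have hintA : ∫ x in A, f x ∂μπ ≤ ∫ x in B, f x ∂μπ := by
    refine setIntegral_mono_set hfint.integrableOn ?_ ?_
    · exact Filter.Eventually.of_forall (fun x => hf0 x)
    · exact HasSubset.Subset.eventuallyLE hAB
  have hintA0 : 0 ≤ ∫ x in A, f x ∂μπ := setIntegral_nonneg hAm (fun x _ => hf0 x)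
  have h1 : (∫ x in A, f x ∂μπ) ^ q ≤ (C * m ^ (1/q)) ^ q :=
    Real.rpow_le_rpow hintA0 (hintA.trans hcell) hq0.le
  have h2 : (C * m ^ (1/q)) ^ q = C ^ q * m := by
    rw [Real.mul_rpow hC.le (Real.rpow_nonneg hm0 _), ← Real.rpow_mul hm0]
    rw [one_div_mul_cancel hq0.ne', Real.rpow_one]
  calc (∫ x in A, f x ∂μπ) ^ q ≤ (C * m ^ (1/q)) ^ q := h1
    _ = C ^ q * m := h2
    _ ≤ C ^ q * ((μπ A).toReal + (r + 3) * η) := by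
        apply mul_le_mul_of_nonneg_left hbound (Real.rpow_nonneg hC.le q)
end Main


set_option maxHeartbeats 2000000 in
/-- **Proposition 4.1(a)** -/
theorem stmt5 {n r : ℕ} (hnr : r ≤ n) (hr : 2 ≤ r)
    {X : Fin n → Type*} [∀ i, MeasurableSpace (X i)]
    (μ : ∀ i, Measure (X i)) [∀ i, IsProbabilityMeasure (μ i)]
    (η : ℝ) (hη0 : 0 < η) (hη1 : η ≤ 1 / (r + 1))
    (C : ℝ) (hC : 0 < C) (p : ℝ≥0∞) (hp : 1 < p)
    (q : ℝ) (hq : 1 ≤ q) (hpq : 1 / p + 1 / ENNReal.ofReal q = 1)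
    (hnonatomic : ∀ i, AtomsLE (μ i) η)
    (𝓗 : Finset (Finset (Fin n))) (e : Finset (Fin n)) (he : e ∈ 𝓗) (hecard : e.card = r)
    (f : (∀ i, X i) → ℝ) (hf0 : 0 ≤ f) (hfmeas : Measurable f) (hfdep : DependsOnF e f)
    (hfint : Integrable f (Measure.pi μ))
    (hreg : LpRegular (Measure.pi μ) e C η p f) :
    ∀ A : Set (∀ i, X i), SPartial e A →
      (∫ x in A, f x ∂(Measure.pi μ)) ^ q
        ≤ C ^ q * (((Measure.pi μ) A).toReal + (r + 3) * η) := by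
  classical
  intro A hA
  obtain ⟨F0, hF0, hAeq⟩ := hA
  set μπ := Measure.pi μ with hμπ
  have hrR : (2:ℝ) ≤ (r:ℝ) := by exact_mod_cast hr
  set Fm : Finset (Fin n) → Set (∀ i, X i) :=
    fun e' => if e' ∈ bdry e then F0 e' else Set.univ with hFmdef
  have hFmcube : ∀ e' ∈ bdry e, CubeSet e' (Fm e') := by
    intro e' he'
    simpa [hFmdef, he'] using hF0 e' he'
  have hFmm : ∀ e', MeasurableSet (Fm e') := by
    intro e'
    by_cases h : e' ∈ bdry e
    · simpa [hFmdef, h] using (hF0 e' h).1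
    · simp [hFmdef, h]
  have hAeq' : A = ⋂ e' ∈ bdry e, Fm e' := by
    rw [hAeq]
    exact Set.iInter₂_congr fun e' he' => by simp [hFmdef, he']
  have hAm : MeasurableSet A := by
    rw [hAeq']
    exact MeasurableSet.biInter (Finset.countable_toSet _) fun e' _ => hFmm e'
  have hη1' : η ≤ 1 := by
    have h1 : (1:ℝ)/(r+1) ≤ 1 := by
      rw [div_le_one (by positivity)]
      linarith
    linarith
  set l := (bdry e).toList with hldef
  have hlnd : l.Nodup := Finset.nodup_toList _
  have hlmem : ∀ x : Finset (Fin n), x ∈ l ↔ x ∈ bdry e := fun x => Finset.mem_toList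
  obtain ⟨hK, hD, hskip, hcells, hdisj, hcover⟩ :=
    greedy_spec μπ Fm hFmm hη0 hη1' l hlnd
  set K := (greedy μπ Fm η l).1 with hKdef
  set cells := (greedy μπ Fm η l).2 with hcellsdef
  set D : Set (∀ i, X i) := ⋂ e'' ∈ K, Fm e'' with hDdef
  have hKbd : ∀ x ∈ K, x ∈ bdry e := fun x hx => (hlmem x).mp (hK x hx)
  have hAD : A ⊆ D := by
    rw [hAeq']
    exact fun x hx => Set.mem_iInter₂.mpr fun e'' he'' =>
      Set.mem_iInter₂.mp hx e'' (hKbd e'' he'')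
  have hDm : MeasurableSet D :=
    MeasurableSet.biInter (Finset.countable_toSet _) fun e'' _ => hFmm e''
  have hDcdisj : ∀ c ∈ cells, Disjoint D c := (List.pairwise_cons.mp hdisj).1
  have hcellS : ∀ c ∈ cells, SPartial e c := by
    intro c hc
    obtain ⟨K', e', hK'1, hK'2, hK'3, rfl, _⟩ := hcells c hc
    exact sPartial_inter_extra (fun x hx => (hlmem x).mp (hK'1 x hx)) hFmcube
      ((hlmem e').mp hK'2) hK'3 ((hFmcube e' ((hlmem e').mp hK'2)).compl)
  have hcellmeas : ∀ c ∈ cells, η ≤ (μπ c).toReal := by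
    intro c hc
    obtain ⟨_, _, _, _, _, _, h⟩ := hcells c hc
    exact h
  by_cases hDb : (μπ D).toReal ≤ (μπ A).toReal + (r + 3) * η
  · -- use B := D directly
    set P : Finset (Set (∀ i, X i)) := (D :: cells).toFinset with hPdef
    have hmemP : ∀ s, s ∈ P ↔ s ∈ D :: cells := fun s => List.mem_toFinset
    have hPS : ∀ s ∈ P, SPartial e s := by
      intro s hs
      rcases List.mem_cons.mp ((hmemP s).mp hs) with rfl | hs'
      · exact sPartial_inter hKbd hFmcube
      · exact hcellS s hs'
    have hPdisj : (P : Set (Set (∀ i, X i))).PairwiseDisjoint id := by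
      intro s hs t ht hst
      simp only [Finset.mem_coe, hmemP] at hs ht
      haveI : Std.Symm (Disjoint : Set (∀ i, X i) → Set (∀ i, X i) → Prop) := ⟨fun _ _ h => h.symm⟩
      exact List.Pairwise.forall hdisj hs ht hst
    have hPcover : ⋃₀ (P : Set (Set (∀ i, X i))) = Set.univ := by
      apply Set.eq_univ_iff_forall.mpr
      intro x
      rcases hcover x with hx | ⟨c, hc, hx⟩
      · exact ⟨D, by simp [hmemP], hx⟩
      · exact ⟨c, by simp [hmemP, List.mem_cons_of_mem _ hc], hx⟩
    have hPmeas : ∀ s ∈ P, η ≤ (μπ s).toReal := by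
      intro s hs
      rcases List.mem_cons.mp ((hmemP s).mp hs) with rfl | hs'
      · exact hD
      · exact hcellmeas s hs'
    exact final_step μπ e hC hη0 hp hq hpq hf0 hfint hreg P hPS hPdisj hPcover hPmeas
      ((hmemP D).mpr (List.mem_cons_self)) hAD hAm hDb
  · -- D is too big: find a bad edge and split using nonatomicity
    push_neg at hDb
    have hbadex : ∃ e'b, e'b ∈ bdry e ∧ e'b ∉ K ∧ (μπ (D ∩ Fm e'b)).toReal < η := by
      by_contra hcon
      push_neg at hcon
      have hterm : ∀ e' ∈ bdry e, μπ (D \ Fm e') ≤ ENNReal.ofReal η := by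
        intro e' he'
        by_cases hKe : e' ∈ K
        · have hsub : D ⊆ Fm e' := fun x hx => Set.mem_iInter₂.mp hx e' hKe
          rw [Set.diff_eq_empty.mpr hsub]
          simp
        · rcases hskip e' ((hlmem e').mpr he') with h | h | h
          · exact absurd h hKe
          · exact (ENNReal.le_ofReal_iff_toReal_le (measure_ne_top μπ _) hη0.le).mpr h.le
          · exact absurd h (not_lt.mpr (hcon e' he' hKe))
      have hsubun : D \ A ⊆ ⋃ e' ∈ bdry e, (D \ Fm e') := by
        intro x hx
        rw [hAeq'] at hx
        have hx2 := hx.2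
        simp only [Set.mem_iInter, not_forall] at hx2
        obtain ⟨e', he', hxe'⟩ := hx2
        exact Set.mem_iUnion₂.mpr ⟨e', he', hx.1, hxe'⟩
      have hDA : μπ (D \ A) ≤ (bdry e).card • ENNReal.ofReal η := by
        calc μπ (D \ A) ≤ ∑ e' ∈ bdry e, μπ (D \ Fm e') :=
              (measure_mono hsubun).trans (measure_biUnion_finset_le _ _)
          _ ≤ (bdry e).card • ENNReal.ofReal η :=
              Finset.sum_le_card_nsmul _ _ _ (fun e' he' => hterm e' he')
      have hcard : ((bdry e).card : ℝ≥0∞) ≤ (r : ℝ≥0∞) := by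
        exact_mod_cast (card_bdry_le e).trans_eq hecard
      have hDA2 : (μπ (D \ A)).toReal ≤ (r:ℝ) * η := by
        have h1 : μπ (D \ A) ≤ (r : ℝ≥0∞) * ENNReal.ofReal η := by
          refine hDA.trans ?_
          rw [nsmul_eq_mul]
          exact mul_le_mul_left hcard _
        have h2 := ENNReal.toReal_mono (by
          exact ENNReal.mul_ne_top (by simp) ENNReal.ofReal_ne_top) h1
        rwa [ENNReal.toReal_mul, ENNReal.toReal_natCast, ENNReal.toReal_ofReal hη0.le] at h2
      have hDle : (μπ D).toReal ≤ (μπ A).toReal + (μπ (D \ A)).toReal := by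
        have h1 : μπ D ≤ μπ A + μπ (D \ A) := by
          refine (measure_mono ?_).trans (measure_union_le _ _)
          intro x hx
          by_cases h : x ∈ A
          · exact Or.inl h
          · exact Or.inr ⟨hx, h⟩
        have h2 := ENNReal.toReal_mono (by
          exact ENNReal.add_ne_top.mpr ⟨measure_ne_top _ _, measure_ne_top _ _⟩) h1
        rwa [ENNReal.toReal_add (measure_ne_top _ _) (measure_ne_top _ _)] at h2
      have : (μπ D).toReal ≤ (μπ A).toReal + (r + 3) * η := by nlinarith
      linarith
    obtain ⟨e'b, hbd, hbK, hbsmall⟩ := hbadex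
    have hDbig : (r + 3) * η < (μπ D).toReal := by
      have : (0:ℝ) ≤ (μπ A).toReal := ENNReal.toReal_nonneg
      linarith
    have h5 : 5 * η ≤ (r + 3) * η := by nlinarith
    obtain ⟨i₀, hi₀⟩ := bdry_subset_nonempty hbd (by omega : 2 ≤ e.card)
    set ρ : Measure (X i₀) :=
      Measure.map (fun x : ∀ i, X i => x i₀) (μπ.restrict (D \ Fm e'b)) with hρdef
    have hρap : ∀ U : Set (X i₀), MeasurableSet U →
        ρ U = μπ (((fun x : ∀ i, X i => x i₀) ⁻¹' U) ∩ (D \ Fm e'b)) := by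
      intro U hU
      rw [hρdef, Measure.map_apply (measurable_pi_apply i₀) hU,
        Measure.restrict_apply ((measurable_pi_apply i₀) hU)]
    haveI hρfin : IsFiniteMeasure ρ := by
      constructor
      rw [hρap Set.univ MeasurableSet.univ]
      exact (measure_mono (Set.subset_univ _)).trans_lt (measure_lt_top μπ _)
    have hρle : ∀ U : Set (X i₀), MeasurableSet U → ρ U ≤ μ i₀ U := by
      intro U hU
      rw [hρap U hU, ← pi_marginal μ i₀ hU]
      exact measure_mono Set.inter_subset_left
    have hρat : AtomsLE ρ η := atoms_le_of_le ρ (μ i₀) hρle (hnonatomic i₀)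
    have hDsplit : (μπ (D ∩ Fm e'b)).toReal + (μπ (D \ Fm e'b)).toReal = (μπ D).toReal := by
      have h1 := measure_inter_add_diff D (hFmm e'b) (μ := μπ)
      have h2 := congrArg ENNReal.toReal h1
      rwa [ENNReal.toReal_add (measure_ne_top _ _) (measure_ne_top _ _)] at h2
    have hρuniv : (ρ Set.univ).toReal = (μπ (D \ Fm e'b)).toReal := by
      rw [hρap Set.univ MeasurableSet.univ]
      simp
    have hηle : η ≤ (ρ Set.univ).toReal := by
      rw [hρuniv]
      linarith
    obtain ⟨U, hUm, hU1, hU2⟩ := exists_measure_between ρ hη0 hρat hη0.le hηle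
    set cyl : Set (∀ i, X i) := (fun x : ∀ i, X i => x i₀) ⁻¹' U with hcyldef
    have hcylm : MeasurableSet cyl := (measurable_pi_apply i₀) hUm
    set Z : Set (∀ i, X i) := Fm e'b ∪ cyl with hZdef
    have hZm : MeasurableSet Z := (hFmm e'b).union hcylm
    have hZcube : CubeSet e'b Z := (hFmcube e'b hbd).union (cubeSet_cyl hi₀ hUm)
    set B : Set (∀ i, X i) := D ∩ Z with hBdef
    set B' : Set (∀ i, X i) := D ∩ Zᶜ with hB'def
    have hBm : MeasurableSet B := hDm.inter hZm
    have hB'm : MeasurableSet B' := hDm.inter hZm.compl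
    have hBsplit : B = (D ∩ Fm e'b) ∪ ((D \ Fm e'b) ∩ cyl) := by
      ext x
      simp only [hBdef, hZdef, Set.mem_inter_iff, Set.mem_union, Set.mem_diff]
      tauto
    have hBdisj2 : Disjoint (D ∩ Fm e'b) ((D \ Fm e'b) ∩ cyl) :=
      Set.disjoint_left.mpr fun x hx1 hx2 => hx2.1.2 hx1.2
    have hcylρ : μπ ((D \ Fm e'b) ∩ cyl) = ρ U := by
      rw [hρap U hUm, Set.inter_comm]
    have hBμ : (μπ B).toReal = (μπ (D ∩ Fm e'b)).toReal + (ρ U).toReal := by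
      rw [hBsplit, measure_union hBdisj2 ((hDm.diff (hFmm e'b)).inter hcylm),
        ENNReal.toReal_add (measure_ne_top _ _) (measure_ne_top _ _), hcylρ]
    have hBlow : η ≤ (μπ B).toReal := by
      rw [hBμ]
      have : (0:ℝ) ≤ (μπ (D ∩ Fm e'b)).toReal := ENNReal.toReal_nonneg
      linarith
    have hBhigh : (μπ B).toReal < 3 * η := by
      rw [hBμ]
      linarith
    have hABsub : A ⊆ B := by
      intro x hx
      refine ⟨hAD hx, Or.inl ?_⟩
      rw [hAeq'] at hx
      exact Set.mem_iInter₂.mp hx e'b hbd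
    have hB'μ : (μπ B').toReal = (μπ D).toReal - (μπ B).toReal := by
      have h1 := measure_inter_add_diff D hZm (μ := μπ)
      have h2 := congrArg ENNReal.toReal h1
      rw [ENNReal.toReal_add (measure_ne_top _ _) (measure_ne_top _ _)] at h2
      have h3 : D \ Z = B' := by rw [hB'def, Set.diff_eq]
      rw [h3] at h2
      linarith [h2]
    have hB'low : η ≤ (μπ B').toReal := by
      rw [hB'μ]
      linarith
    have hBS : SPartial e B :=
      sPartial_inter_extra hKbd hFmcube hbd hbK hZcube
    have hB'S : SPartial e B' :=
      sPartial_inter_extra hKbd hFmcube hbd hbK hZcube.compl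
    set P : Finset (Set (∀ i, X i)) := (B :: B' :: cells).toFinset with hPdef
    have hmemP : ∀ s, s ∈ P ↔ s ∈ B :: B' :: cells := fun s => List.mem_toFinset
    have hlistpw : List.Pairwise Disjoint (B :: B' :: cells) := by
      refine List.pairwise_cons.mpr ⟨?_, List.pairwise_cons.mpr ⟨?_, (List.pairwise_cons.mp hdisj).2⟩⟩
      · intro c hc
        rcases List.mem_cons.mp hc with rfl | hc'
        · exact Set.disjoint_left.mpr fun x hx1 hx2 => hx2.2 hx1.2
        · exact Set.disjoint_left.mpr fun x hx1 hx2 =>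
            Set.disjoint_left.mp (hDcdisj c hc') hx1.1 hx2
      · intro c hc
        exact Set.disjoint_left.mpr fun x hx1 hx2 =>
          Set.disjoint_left.mp (hDcdisj c hc) hx1.1 hx2
    have hPS : ∀ s ∈ P, SPartial e s := by
      intro s hs
      rcases List.mem_cons.mp ((hmemP s).mp hs) with rfl | hs'
      · exact hBS
      · rcases List.mem_cons.mp hs' with rfl | hs''
        · exact hB'S
        · exact hcellS s hs''
    have hPdisj : (P : Set (Set (∀ i, X i))).PairwiseDisjoint id := by
      intro s hs t ht hst
      simp only [Finset.mem_coe, hmemP] at hs ht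
      haveI : Std.Symm (Disjoint : Set (∀ i, X i) → Set (∀ i, X i) → Prop) := ⟨fun _ _ h => h.symm⟩
      exact List.Pairwise.forall hlistpw hs ht hst
    have hPcover : ⋃₀ (P : Set (Set (∀ i, X i))) = Set.univ := by
      apply Set.eq_univ_iff_forall.mpr
      intro x
      rcases hcover x with hx | ⟨c, hc, hx⟩
      · by_cases hxZ : x ∈ Z
        · exact ⟨B, by simp [hmemP], ⟨hx, hxZ⟩⟩
        · exact ⟨B', by simp [hmemP], ⟨hx, hxZ⟩⟩
      · exact ⟨c, by simp [hmemP, List.mem_cons_of_mem _ (List.mem_cons_of_mem _ hc)], hx⟩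
    have hPmeas : ∀ s ∈ P, η ≤ (μπ s).toReal := by
      intro s hs
      rcases List.mem_cons.mp ((hmemP s).mp hs) with rfl | hs'
      · exact hBlow
      · rcases List.mem_cons.mp hs' with rfl | hs''
        · exact hB'low
        · exact hcellmeas s hs''
    have hbound : (μπ B).toReal ≤ (μπ A).toReal + (r + 3) * η := by
      have h0 : (0:ℝ) ≤ (μπ A).toReal := ENNReal.toReal_nonneg
      nlinarith
    exact final_step μπ e hC hη0 hp hq hpq hf0 hfint hreg P hPS hPdisj hPcover hPmeas
      ((hmemP B).mpr (List.mem_cons_self)) hABsub hAm hbound
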